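/- The coproduct on the Hopf algebra of rooted trees defined by Δ ∘ B₊ = B₊ ⊗ 1 + (id ⊗ B₊) ∘ Δ (extended as an algebra morphism) is coassociative. -/

import Mathlib

/-- Planar rooted trees. -/
inductive RTree : Type where
  | node : List RTree → RTree

open TensorProduct

variable (K : Type) [Field K]

/-- The algebra of rooted trees: the monoid algebra on the free monoid of
rooted trees (with basis the rooted forests). -/
abbrev HTrees := MonoidAlgebra K (FreeMonoid RTree)

/-- The grafting operator `B₊`, sending a forest to the tree obtained by
attaching all its roots to a new common root. -/
noncomputable def Bplus : HTrees K →ₗ[K] HTrees K :=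
  MonoidAlgebra.mapDomainLinearMap K K
    (fun f : FreeMonoid RTree => FreeMonoid.of (RTree.node (FreeMonoid.toList f)))

lemma Bplus_single (m : FreeMonoid RTree) :
    Bplus K (MonoidAlgebra.single m (1:K)) =
      MonoidAlgebra.single (FreeMonoid.of (RTree.node (FreeMonoid.toList m))) (1:K) := by
  exact MonoidAlgebra.mapDomainLinearMap_single _ _ _

lemma forest_aux {T : Type} [Semiring T] [Algebra K T]
    (F G : HTrees K →ₐ[K] T)
    (hstep : ∀ a : HTrees K, F a = G a → F (Bplus K a) = G (Bplus K a)) :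
    ∀ l : List RTree,
      F (MonoidAlgebra.single (FreeMonoid.ofList l) (1:K)) =
        G (MonoidAlgebra.single (FreeMonoid.ofList l) (1:K))
  | [] => by
      have h1 : (FreeMonoid.ofList ([] : List RTree)) = 1 := rfl
      rw [h1]
      rw [show (MonoidAlgebra.single (1 : FreeMonoid RTree) (1:K)) = (1 : HTrees K) from rfl]
      simp
  | (RTree.node l') :: l => by
      have hmul : (MonoidAlgebra.single (FreeMonoid.ofList (RTree.node l' :: l)) (1:K)) =
          MonoidAlgebra.single (FreeMonoid.of (RTree.node l')) (1:K) *
            MonoidAlgebra.single (FreeMonoid.ofList l) (1:K) := by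
        rw [MonoidAlgebra.single_mul_single, one_mul]
        rfl
      have ht : (MonoidAlgebra.single (FreeMonoid.of (RTree.node l')) (1:K)) =
          Bplus K (MonoidAlgebra.single (FreeMonoid.ofList l') (1:K)) := by
        rw [Bplus_single]
        rfl
      rw [hmul, map_mul, map_mul, forest_aux F G hstep l, ht,
        hstep _ (forest_aux F G hstep l')]


set_option maxHeartbeats 1000000 in
set_option synthInstance.maxHeartbeats 400000 in
/-- the coproduct on the Hopf algebra of rooted trees, i.e. the
algebra morphism `Δ : H_R → H_R ⊗ H_R` determined by
`Δ ∘ B₊ = B₊ ⊗ 1 + (id ⊗ B₊) ∘ Δ`, is coassociative. -/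
theorem rooted_trees_coassoc
    (Δ : HTrees K →ₐ[K] (HTrees K ⊗[K] HTrees K))
    (hΔ : ∀ a : HTrees K,
      Δ (Bplus K a) = (Bplus K a) ⊗ₜ[K] (1 : HTrees K) +
        (TensorProduct.map LinearMap.id (Bplus K)) (Δ a)) :
    ∀ a : HTrees K,
      (TensorProduct.assoc K (HTrees K) (HTrees K) (HTrees K))
          ((TensorProduct.map Δ.toLinearMap LinearMap.id) (Δ a)) =
        (TensorProduct.map LinearMap.id Δ.toLinearMap) (Δ a) := by
  set F : HTrees K →ₐ[K] HTrees K ⊗[K] (HTrees K ⊗[K] HTrees K) :=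
    ((Algebra.TensorProduct.assoc K K K (HTrees K) (HTrees K) (HTrees K)).toAlgHom.comp
      ((Algebra.TensorProduct.map Δ (AlgHom.id K (HTrees K))).comp Δ)) with hF
  set G : HTrees K →ₐ[K] HTrees K ⊗[K] (HTrees K ⊗[K] HTrees K) :=
    ((Algebra.TensorProduct.map (AlgHom.id K (HTrees K)) Δ).comp Δ) with hG
  have hFa : ∀ a : HTrees K, F a =
      (TensorProduct.assoc K (HTrees K) (HTrees K) (HTrees K))
        ((TensorProduct.map Δ.toLinearMap LinearMap.id) (Δ a)) := fun a => rfl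
  have hGa : ∀ a : HTrees K, G a =
      (TensorProduct.map LinearMap.id Δ.toLinearMap) (Δ a) := fun a => rfl
  suffices hFG : F = G by
    intro a
    rw [← hFa, ← hGa, hFG]
  have hstep : ∀ a : HTrees K, F a = G a → F (Bplus K a) = G (Bplus K a) := by
    intro a h
    rw [hFa, hGa] at h ⊢
    have k0 : ∀ (v : HTrees K ⊗[K] HTrees K) (z : HTrees K),
        (TensorProduct.assoc K (HTrees K) (HTrees K) (HTrees K)) (v ⊗ₜ[K] (Bplus K z)) =
          (TensorProduct.map LinearMap.id (TensorProduct.map LinearMap.id (Bplus K)))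
            ((TensorProduct.assoc K (HTrees K) (HTrees K) (HTrees K)) (v ⊗ₜ[K] z)) := by
      intro v z
      induction v with
      | zero => simp [zero_tmul]
      | tmul a b => simp
      | add v w hv hw => simp only [add_tmul, map_add, hv, hw]
    have k1 : ∀ u : HTrees K ⊗[K] HTrees K,
        (TensorProduct.assoc K (HTrees K) (HTrees K) (HTrees K))
            ((TensorProduct.map Δ.toLinearMap (Bplus K)) u) =
          (TensorProduct.map LinearMap.id (TensorProduct.map LinearMap.id (Bplus K)))
            ((TensorProduct.assoc K (HTrees K) (HTrees K) (HTrees K))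
              ((TensorProduct.map Δ.toLinearMap LinearMap.id) u)) := by
      intro u
      induction u with
      | zero => simp
      | tmul x y =>
          simp only [map_tmul, LinearMap.id_coe, id_eq]
          exact k0 (Δ.toLinearMap x) y
      | add v w hv hw => simp [hv, hw]
    have k2 : ∀ u : HTrees K ⊗[K] HTrees K,
        (TensorProduct.assoc K (HTrees K) (HTrees K) (HTrees K))
            (((TensorProduct.map LinearMap.id (Bplus K)) u) ⊗ₜ[K] (1:HTrees K)) =
          (TensorProduct.map LinearMap.id
            (((TensorProduct.mk K (HTrees K) (HTrees K)).flip (1:HTrees K)).comp (Bplus K))) u := by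
      intro u
      induction u with
      | zero => simp
      | tmul x y => simp
      | add v w hv hw => simp [add_tmul, hv, hw]
    have k3 : ∀ u : HTrees K ⊗[K] HTrees K,
        (TensorProduct.map LinearMap.id Δ.toLinearMap)
            ((TensorProduct.map LinearMap.id (Bplus K)) u) =
          (TensorProduct.map LinearMap.id
              (((TensorProduct.mk K (HTrees K) (HTrees K)).flip (1:HTrees K)).comp (Bplus K))) u +
            (TensorProduct.map LinearMap.id (TensorProduct.map LinearMap.id (Bplus K)))
              ((TensorProduct.map LinearMap.id Δ.toLinearMap) u) := by
      intro u
      induction u with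
      | zero => simp
      | tmul x y => simp [hΔ y, tmul_add]
      | add v w hv hw => simp only [map_add, hv, hw]; abel
    rw [hΔ a]
    rw [map_add, map_add, map_add]
    rw [map_tmul]
    simp only [AlgHom.toLinearMap_apply]
    rw [hΔ a, add_tmul, map_add, assoc_tmul]
    have mcomp : ∀ u : HTrees K ⊗[K] HTrees K,
        (TensorProduct.map Δ.toLinearMap LinearMap.id)
            ((TensorProduct.map LinearMap.id (Bplus K)) u) =
          (TensorProduct.map Δ.toLinearMap (Bplus K)) u := by
      intro u
      induction u with
      | zero => simp
      | tmul x y => simp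
      | add v w hv hw => simp [hv, hw]
    rw [mcomp, k1, h]
    simp only [LinearMap.id_coe, id_eq]
    rw [k2, k3, map_tmul]
    simp only [AlgHom.toLinearMap_apply, map_one, Algebra.TensorProduct.one_def,
      LinearMap.id_coe, id_eq]
    abel
  exact MonoidAlgebra.algHom_ext (fun m => by
    have := forest_aux K F G hstep (FreeMonoid.toList m)
    simpa using this) (Subsingleton.elim _ _)
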